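/- One-step lower bound on the augmented Lagrangian: under assumptions (A1)-(A3), along the asynchronous proximal ADMM iterates one has y_{kj}^{t+1} = −[∇g_k(z_k^{[t+1]_k})]_j for all j ∈ N_k, and for every t: L({x_k^{t+1}}, z^{t+1}, {y_k^{t+1}}) ≥ P + Σ_{k=1}^K [ ((ρ_k − 4L_k)/2) Σ_{j∈N_k} ‖x_{kj}^{t+1} − z_j^{t+1}‖² − (L_k/2) Σ_{j∈N_k} ‖z_j^{t+1} − z_j^{[t+1]_k}‖² ], where P is the optimal value of the problem min Σ_k g_k({x_n}_{n∈N_k}) + h_k(x_k) subject to x_k ∈ X_k for all k. -/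

import Mathlib

open Filter Topology RealInnerProductSpace

noncomputable section

/-- Zero-padded restriction of a vector of nodal variables to a neighborhood:
coordinates outside the neighborhood are set to zero. -/
def restr {K : ℕ} (Nk : Finset (Fin K)) (v : Fin K → ℝ) : EuclideanSpace ℝ (Fin K) :=
  WithLp.toLp 2 (fun j => if j ∈ Nk then v j else 0)

/-- The setting of the asynchronous proximal ADMM: network data, assumptions
(A1)-(A2), and the algorithmic update equations (i)-(iii) together with the
delay bounds and the update-frequency condition. -/
structure ProxADMM (K : ℕ) where
  /-- neighborhoods, `j ∈ Nb k` means `j ∈ N_k` -/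
  Nb : Fin K → Finset (Fin K)
  self_mem : ∀ k, k ∈ Nb k
  symm : ∀ k j, j ∈ Nb k ↔ k ∈ Nb j
  /-- local cost of node `k`, as a function of the zero-padded neighborhood variables -/
  g : Fin K → EuclideanSpace ℝ (Fin K) → ℝ
  g_local : ∀ k v w, (∀ j ∈ Nb k, v j = w j) → g k v = g k w
  /-- the Lipschitz constants of (A1) -/
  L : Fin K → ℝ
  L_pos : ∀ k, 0 < L k
  g_diff : ∀ k, Differentiable ℝ (g k)
  /-- (A1): the gradient of `g k` is `L k`-Lipschitz -/
  g_grad_lip : ∀ k v w, ‖gradient (g k) v - gradient (g k) w‖ ≤ L k * ‖v - w‖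
  /-- the convex nonsmooth part -/
  h : Fin K → ℝ → ℝ
  h_convex : ∀ k, ConvexOn ℝ Set.univ (h k)
  /-- the constraint sets -/
  Xs : Fin K → Set ℝ
  Xs_nonempty : ∀ k, (Xs k).Nonempty
  Xs_compact : ∀ k, IsCompact (Xs k)
  Xs_convex : ∀ k, Convex ℝ (Xs k)
  /-- (A2): `g k` is bounded below over the constraint set -/
  g_bddBelow : ∀ k, ∃ b, ∀ v : Fin K → ℝ, (∀ j, v j ∈ Xs j) → b ≤ g k (restr (Nb k) v)
  /-- penalty parameters -/
  ρ : Fin K → ℝ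
  ρ_pos : ∀ k, 0 < ρ k
  /-- update frequencies `f_k` -/
  freq : Fin K → ℝ
  freq_pos : ∀ k, 0 < freq k
  freq_le_one : ∀ k, freq k ≤ 1
  /-- maximum delays `T_k` -/
  Td : Fin K → ℕ
  /-- updating sets `S^t` -/
  Sset : ℕ → Finset (Fin K)
  /-- delayed index: `τ t k = [t+1]_k` -/
  τ : ℕ → Fin K → ℕ
  τ_le : ∀ t k, τ t k ≤ t + 1
  τ_ge : ∀ t k, t + 1 ≤ τ t k + Td k
  /-- iterates -/
  x : ℕ → Fin K → Fin K → ℝ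
  z : ℕ → Fin K → ℝ
  y : ℕ → Fin K → Fin K → ℝ
  z_init_mem : ∀ j, z 0 j ∈ Xs j
  /-- (i): feasibility of the `z`-update -/
  z_update_mem : ∀ t j, j ∈ Sset t → z (t + 1) j ∈ Xs j
  /-- (i): for `j ∈ S^t`, `z_j^{t+1}` minimizes the `j`-th block over `X_j` -/
  z_update_min : ∀ t j, j ∈ Sset t → IsMinOn
      (fun w => h j w + ∑ k ∈ Nb j, (y t k j * (x t k j - w) + ρ k / 2 * (x t k j - w) ^ 2))
      (Xs j) (z (t + 1) j)
  /-- (i): non-updating nodes keep their old value -/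
  z_noupdate : ∀ t j, j ∉ Sset t → z (t + 1) j = z t j
  /-- (ii): proximal (linearized) `x`-update with delayed gradient -/
  x_update : ∀ t k, ∀ j ∈ Nb k,
      x (t + 1) k j = z (t + 1) j
        - (1 / ρ k) * (gradient (g k) (restr (Nb k) (z (τ t k))) j + y t k j)
  /-- (iii): dual update -/
  y_update : ∀ t k, ∀ j ∈ Nb k,
      y (t + 1) k j = y t k j + ρ k * (x (t + 1) k j - z (t + 1) j)
  /-- in any window of `T` consecutive iterations node `k` updates at least `f_k T` times -/
  update_freq : ∀ k (t₀ T : ℕ),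
      freq k * T ≤ ((Finset.Ico t₀ (t₀ + T)).filter (fun t => k ∈ Sset t)).card

/-- The augmented Lagrangian. -/
def ProxADMM.Lag {K : ℕ} (P : ProxADMM K) (xx : Fin K → Fin K → ℝ) (zz : Fin K → ℝ)
    (yy : Fin K → Fin K → ℝ) : ℝ :=
  ∑ k, (P.g k (restr (P.Nb k) (xx k)) + P.h k (zz k)
    + ∑ j ∈ P.Nb k, (yy k j * (xx k j - zz j) + P.ρ k / 2 * (xx k j - zz j) ^ 2))

end


section AuxLemmas

open RealInnerProductSpace

lemma descent_lemma_aux {F : Type*} [NormedAddCommGroup F] [InnerProductSpace ℝ F]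
    [CompleteSpace F] (f : F → ℝ) (hf : Differentiable ℝ f) (L : ℝ)
    (hlip : ∀ a b, ‖gradient f a - gradient f b‖ ≤ L * ‖a - b‖) (v u : F) :
    f v + ⟪gradient f v, u - v⟫ - L / 2 * ‖u - v‖ ^ 2 ≤ f u := by
  set d := u - v with hd
  set ψ : ℝ → ℝ := fun s => f (v + s • d) - s * ⟪gradient f v, d⟫ + L / 2 * s ^ 2 * ‖d‖ ^ 2
    with hψ
  have hγ : ∀ s : ℝ, HasDerivAt (fun s : ℝ => v + s • d) d s := by
    intro s
    simpa using ((hasDerivAt_id s).smul_const d).const_add v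
  have hφ : ∀ s : ℝ, HasDerivAt (fun s : ℝ => f (v + s • d))
      ⟪gradient f (v + s • d), d⟫ s := by
    intro s
    have h1 : HasGradientAt f (gradient f (v + s • d)) (v + s • d) :=
      (hf _).hasGradientAt
    have h2 := h1.hasFDerivAt.comp_hasDerivAt s (hγ s)
    simpa [InnerProductSpace.toDual_apply_apply, Function.comp_def] using h2
  have hψ' : ∀ s : ℝ, HasDerivAt ψ
      (⟪gradient f (v + s • d), d⟫ - ⟪gradient f v, d⟫ + L * s * ‖d‖ ^ 2) s := by
    intro s
    have h := ((hφ s).sub ((hasDerivAt_id s).mul_const (⟪gradient f v, d⟫ : ℝ))).add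
      (((hasDerivAt_pow 2 s).const_mul (L / 2)).mul_const (‖d‖ ^ 2))
    convert h using 2 <;> first | rfl | (push_cast; ring)
  have hψd : Differentiable ℝ ψ := fun s => (hψ' s).differentiableAt
  have hderiv_nonneg : ∀ s ∈ Set.Icc (0:ℝ) 1, 0 ≤ deriv ψ s := by
    intro s hs
    rw [(hψ' s).deriv]
    have h1 : ⟪gradient f v - gradient f (v + s • d), d⟫
        ≤ ‖gradient f v - gradient f (v + s • d)‖ * ‖d‖ := real_inner_le_norm _ _
    have h3 : ‖gradient f v - gradient f (v + s • d)‖ ≤ L * ‖v - (v + s • d)‖ := hlip _ _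
    have h4 : ‖v - (v + s • d)‖ = s * ‖d‖ := by
      rw [show v - (v + s • d) = -(s • d) by abel, norm_neg, norm_smul]
      simp [abs_of_nonneg hs.1, Real.norm_eq_abs]
    have h5 : ⟪gradient f v, d⟫ - ⟪gradient f (v + s • d), d⟫
        = ⟪gradient f v - gradient f (v + s • d), d⟫ := by rw [inner_sub_left]
    have hdn : 0 ≤ ‖d‖ := norm_nonneg d
    rw [h4] at h3
    nlinarith [mul_le_mul_of_nonneg_right h3 hdn]
  have hmono : MonotoneOn ψ (Set.Icc (0:ℝ) 1) :=
    monotoneOn_of_deriv_nonneg (convex_Icc 0 1) hψd.continuous.continuousOn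
      (hψd.differentiableOn) (fun s hs => hderiv_nonneg s (Set.mem_of_mem_of_subset hs
        (by rw [interior_Icc]; exact Set.Ioo_subset_Icc_self)))
  have h01 := hmono (Set.left_mem_Icc.mpr zero_le_one) (Set.right_mem_Icc.mpr zero_le_one)
    zero_le_one
  simp only [hψ, zero_smul, add_zero, one_smul, zero_mul, mul_zero, mul_one,
    sub_zero, one_pow] at h01
  have huv : v + d = u := by rw [hd]; abel
  rw [huv] at h01
  norm_num at h01 ⊢
  linarith

lemma norm_sq_eq_sum_of_support {K : ℕ} (s : Finset (Fin K)) (a : EuclideanSpace ℝ (Fin K))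
    (h : ∀ j ∉ s, a j = 0) : ‖a‖ ^ 2 = ∑ j ∈ s, (a j) ^ 2 := by
  rw [EuclideanSpace.norm_eq, Real.sq_sqrt (by positivity)]
  rw [← Finset.sum_subset s.subset_univ (fun j _ hj => by simp [h j hj])]
  exact Finset.sum_congr rfl fun j _ => by rw [Real.norm_eq_abs, sq_abs]

lemma inner_eq_sum_of_support {K : ℕ} (s : Finset (Fin K)) (g a : EuclideanSpace ℝ (Fin K))
    (h : ∀ j ∉ s, a j = 0) : ⟪g, a⟫ = ∑ j ∈ s, g j * a j := by
  rw [show (⟪g, a⟫ : ℝ) = ∑ j, g j * a j by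
    simp [PiLp.inner_apply, RCLike.inner_apply, mul_comm]]
  exact (Finset.sum_subset s.subset_univ (fun j _ hj => by simp [h j hj])).symm

end AuxLemmas

/-- One-step lower bound on the augmented Lagrangian (asynchronous proximal
ADMM, assumptions (A1)-(A3)): the dual iterates satisfy
`y_{kj}^{t+1} = −[∇g_k(z_k^{[t+1]_k})]_j`, and the Lagrangian at time `t+1` is
bounded below in terms of the optimal value `P` of the original problem. -/
theorem prox_admm_one_step_lower_bound {K : ℕ} (P : ProxADMM K)
    (α β : Fin K → ℝ)
    (hα : ∀ k, α k = P.ρ k * P.freq k / 2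
      - (7 * P.L k / (2 * P.ρ k ^ 2) + 1 / P.ρ k) * ((P.Nb k).card : ℝ) * P.L k ^ 2
          * ((P.Td k : ℝ) + 1) ^ 2
      - ((P.Nb k).card : ℝ) * P.L k * (P.Td k : ℝ) ^ 2 / 2)
    (hβ : ∀ k, β k = P.ρ k - 7 * P.L k)
    (hA3 : ∀ k, 0 < α k ∧ 0 < β k)
    -- `Popt` is the optimal value of `min Σ_k g_k({x_n}_{n∈N_k}) + h_k(x_k)`
    -- subject to `x_k ∈ X_k` for every `k`
    (Popt : ℝ)
    (hPopt : Popt = sInf {v : ℝ | ∃ u : Fin K → ℝ, (∀ k, u k ∈ P.Xs k) ∧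
      v = ∑ k, (P.g k (restr (P.Nb k) u) + P.h k (u k))})
    (t : ℕ) :
    (∀ k : Fin K, ∀ j ∈ P.Nb k,
      P.y (t + 1) k j = - gradient (P.g k) (restr (P.Nb k) (P.z (P.τ t k))) j) ∧
    Popt + ∑ k, ((P.ρ k - 4 * P.L k) / 2 *
          ∑ j ∈ P.Nb k, ‖P.x (t + 1) k j - P.z (t + 1) j‖ ^ 2
        - P.L k / 2 * ∑ j ∈ P.Nb k, ‖P.z (t + 1) j - P.z (P.τ t k) j‖ ^ 2)
      ≤ P.Lag (P.x (t + 1)) (P.z (t + 1)) (P.y (t + 1)) := by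
  classical
  have hy : ∀ (s : ℕ) (k : Fin K), ∀ j ∈ P.Nb k,
      P.y (s + 1) k j = - gradient (P.g k) (restr (P.Nb k) (P.z (P.τ s k))) j := by
    intro s k j hj
    have hρ : P.ρ k ≠ 0 := ne_of_gt (P.ρ_pos k)
    rw [P.y_update s k j hj, P.x_update s k j hj]
    field_simp
    ring
  refine ⟨hy t, ?_⟩
  -- feasibility of the z-iterates
  have hfeas : ∀ s j, P.z s j ∈ P.Xs j := by
    intro s
    induction s with
    | zero => exact P.z_init_mem
    | succ s ih =>
      intro j
      by_cases hj : j ∈ P.Sset s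
      · exact P.z_update_mem s j hj
      · rw [P.z_noupdate s j hj]; exact ih j
  -- lower bounds for h on the compact constraint sets
  have hhc : ∀ k, Continuous (P.h k) := fun k => by
    have := (P.h_convex k).continuousOn isOpen_univ
    exact continuousOn_univ.mp this
  have hmin : ∀ k, ∃ c ∈ P.Xs k, ∀ x ∈ P.Xs k, P.h k c ≤ P.h k x := by
    intro k
    obtain ⟨c, hc, hcm⟩ := (P.Xs_compact k).exists_isMinOn (P.Xs_nonempty k)
      (hhc k).continuousOn
    exact ⟨c, hc, fun x hx => hcm hx⟩
  choose m hmXs hmle using hmin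
  choose b hb using P.g_bddBelow
  -- Popt is at most the objective value at the feasible point z^{t+1}
  have hbdd : BddBelow {v : ℝ | ∃ u : Fin K → ℝ, (∀ k, u k ∈ P.Xs k) ∧
      v = ∑ k, (P.g k (restr (P.Nb k) u) + P.h k (u k))} := by
    refine ⟨∑ k, (b k + P.h k (m k)), ?_⟩
    rintro v ⟨uu, huu, rfl⟩
    exact Finset.sum_le_sum fun k _ =>
      add_le_add (hb k uu huu) (hmle k (uu k) (huu k))
  have hPle : Popt ≤ ∑ k, (P.g k (restr (P.Nb k) (P.z (t + 1)))
      + P.h k (P.z (t + 1) k)) := by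
    rw [hPopt]
    exact csInf_le hbdd ⟨P.z (t + 1), fun j => hfeas (t + 1) j, rfl⟩
  -- the per-node lower bound
  have key : ∀ k : Fin K,
      P.g k (restr (P.Nb k) (P.z (t + 1))) + P.h k (P.z (t + 1) k)
        + ((P.ρ k - 4 * P.L k) / 2 *
            ∑ j ∈ P.Nb k, (P.x (t + 1) k j - P.z (t + 1) j) ^ 2
          - P.L k / 2 * ∑ j ∈ P.Nb k, (P.z (t + 1) j - P.z (P.τ t k) j) ^ 2)
      ≤ P.g k (restr (P.Nb k) (P.x (t + 1) k)) + P.h k (P.z (t + 1) k)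
        + ∑ j ∈ P.Nb k, (P.y (t + 1) k j * (P.x (t + 1) k j - P.z (t + 1) j)
            + P.ρ k / 2 * (P.x (t + 1) k j - P.z (t + 1) j) ^ 2) := by
    intro k
    set u : EuclideanSpace ℝ (Fin K) := restr (P.Nb k) (P.x (t + 1) k) with hu
    set v : EuclideanSpace ℝ (Fin K) := restr (P.Nb k) (P.z (t + 1)) with hv
    set w : EuclideanSpace ℝ (Fin K) := restr (P.Nb k) (P.z (P.τ t k)) with hw
    have huvj : ∀ j ∈ P.Nb k, (u - v) j = P.x (t + 1) k j - P.z (t + 1) j := by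
      intro j hj
      show u j - v j = _
      simp [hu, hv, restr, hj]
    have huv0 : ∀ j ∉ P.Nb k, (u - v) j = 0 := by
      intro j hj
      show u j - v j = 0
      simp [hu, hv, restr, hj]
    have hvwj : ∀ j ∈ P.Nb k, (v - w) j = P.z (t + 1) j - P.z (P.τ t k) j := by
      intro j hj
      show v j - w j = _
      simp [hv, hw, restr, hj]
    have hvw0 : ∀ j ∉ P.Nb k, (v - w) j = 0 := by
      intro j hj
      show v j - w j = 0
      simp [hv, hw, restr, hj]
    have hA : ‖u - v‖ ^ 2 = ∑ j ∈ P.Nb k, (P.x (t + 1) k j - P.z (t + 1) j) ^ 2 := by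
      rw [norm_sq_eq_sum_of_support _ _ huv0]
      exact Finset.sum_congr rfl fun j hj => by rw [huvj j hj]
    have hB : ‖v - w‖ ^ 2 = ∑ j ∈ P.Nb k, (P.z (t + 1) j - P.z (P.τ t k) j) ^ 2 := by
      rw [norm_sq_eq_sum_of_support _ _ hvw0]
      exact Finset.sum_congr rfl fun j hj => by rw [hvwj j hj]
    have hsum : ∑ j ∈ P.Nb k, (P.y (t + 1) k j * (P.x (t + 1) k j - P.z (t + 1) j)
          + P.ρ k / 2 * (P.x (t + 1) k j - P.z (t + 1) j) ^ 2)
        = -⟪gradient (P.g k) w, u - v⟫ + P.ρ k / 2 * ‖u - v‖ ^ 2 := by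
      rw [Finset.sum_add_distrib, ← Finset.mul_sum, hA]
      congr 1
      rw [inner_eq_sum_of_support _ _ _ huv0, ← Finset.sum_neg_distrib]
      refine Finset.sum_congr rfl fun j hj => ?_
      rw [hy t k j hj, huvj j hj]
      ring
    have hdesc := descent_lemma_aux (P.g k) (P.g_diff k) (P.L k) (P.g_grad_lip k) v u
    have hcs : |⟪gradient (P.g k) v - gradient (P.g k) w, u - v⟫|
        ≤ ‖gradient (P.g k) v - gradient (P.g k) w‖ * ‖u - v‖ := abs_real_inner_le_norm _ _
    have hlipvw : ‖gradient (P.g k) v - gradient (P.g k) w‖ ≤ P.L k * ‖v - w‖ :=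
      P.g_grad_lip k v w
    have hinnersub : ⟪gradient (P.g k) v - gradient (P.g k) w, u - v⟫
        = ⟪gradient (P.g k) v, u - v⟫ - ⟪gradient (P.g k) w, u - v⟫ := inner_sub_left _ _ _
    have hL : (0:ℝ) < P.L k := P.L_pos k
    have h1 : 0 ≤ ‖u - v‖ := norm_nonneg _
    have h2 : 0 ≤ ‖v - w‖ := norm_nonneg _
    rw [hsum, ← hA, ← hB]
    have habs := abs_le.mp hcs
    nlinarith [sq_nonneg (‖u - v‖ - ‖v - w‖), sq_nonneg ‖u - v‖,
      mul_le_mul_of_nonneg_right hlipvw h1]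
  -- combine
  have hsumkey := Finset.sum_le_sum (s := Finset.univ) (fun k _ => key k)
  rw [Finset.sum_add_distrib] at hsumkey
  unfold ProxADMM.Lag
  simp only [Real.norm_eq_abs, sq_abs]
  calc Popt + ∑ k, ((P.ρ k - 4 * P.L k) / 2 *
          ∑ j ∈ P.Nb k, (P.x (t + 1) k j - P.z (t + 1) j) ^ 2
        - P.L k / 2 * ∑ j ∈ P.Nb k, (P.z (t + 1) j - P.z (P.τ t k) j) ^ 2)
      ≤ (∑ k, (P.g k (restr (P.Nb k) (P.z (t + 1))) + P.h k (P.z (t + 1) k)))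
        + ∑ k, ((P.ρ k - 4 * P.L k) / 2 *
            ∑ j ∈ P.Nb k, (P.x (t + 1) k j - P.z (t + 1) j) ^ 2
          - P.L k / 2 * ∑ j ∈ P.Nb k, (P.z (t + 1) j - P.z (P.τ t k) j) ^ 2) := by
        linarith
    _ ≤ _ := by
        refine hsumkey.trans_eq ?_
        exact Finset.sum_congr rfl fun k _ => by ring
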